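/- Let G be a (K₂ ∪ 3K₁)-free graph, C a longest cycle in G with a fixed orientation, and H a component of G − V(C) such that at least three distinct vertices of C have neighbors in H. Then H is a trivial component, i.e., H consists of a single vertex. -/

import Mathlib

open SimpleGraph

/-- The disjoint union of an edge (on vertices 0,1) and `k` isolated vertices. -/
def K2uK (k : ℕ) : SimpleGraph (Fin (k + 2)) :=
  SimpleGraph.fromRel (fun a b => a = 0 ∧ b = 1)

/-- `G` contains no induced copy of `H`. -/
def HFree {α β : Type*} (H : SimpleGraph α) (G : SimpleGraph β) : Prop :=
  IsEmpty (H ↪g G)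

/-- The number of connected components of a graph. -/
noncomputable def numComp {V : Type*} (G : SimpleGraph V) : ℕ :=
  Nat.card G.ConnectedComponent

/-- `S` is a cut set of `G`: removing `S` leaves at least two components. -/
def IsCutSet {V : Type*} (G : SimpleGraph V) (S : Set V) : Prop :=
  2 ≤ numComp (G.induce (Sᶜ : Set V))

/-- `f : ZMod n → V` describes an oriented cycle of length `n` in `G`. -/
structure IsOrientedCycle {V : Type*} (G : SimpleGraph V) (n : ℕ) (f : ZMod n → V) :
    Prop where
  three_le : 3 ≤ n
  inj : Function.Injective f
  adj : ∀ i, G.Adj (f i) (f (i + 1))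

/-- `f` is a longest cycle of `G`. -/
def IsLongestCycle {V : Type*} (G : SimpleGraph V) (n : ℕ) (f : ZMod n → V) : Prop :=
  IsOrientedCycle G n f ∧ ∀ (m : ℕ) (g : ZMod m → V), IsOrientedCycle G m g → m ≤ n

lemma cycle_of_list {V : Type*} (G : SimpleGraph V) (l : List V) (h3 : 3 ≤ l.length)
    (hnd : l.Nodup) (hch : l.Chain' G.Adj)
    (hwrap : ∀ (h : l ≠ []), G.Adj (l.getLast h) (l.head h)) :
    ∃ g : ZMod l.length → V, IsOrientedCycle G l.length g := by
  haveI : NeZero l.length := ⟨by omega⟩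
  have hne : l ≠ [] := by intro h; simp [h] at h3
  refine ⟨fun z => l.get ⟨z.val, ZMod.val_lt z⟩, h3, ?_, ?_⟩
  · intro a b hab
    have := (List.Nodup.get_inj_iff hnd).mp hab
    exact ZMod.val_injective l.length (by simpa using congrArg Fin.val this)
  · intro z
    have hv1 : (z + 1).val = (z.val + 1) % l.length := by
      haveI : Fact (1 < l.length) := ⟨by omega⟩
      rw [ZMod.val_add, ZMod.val_one]
    rcases Nat.lt_or_ge (z.val + 1) l.length with h | h
    · have h0 : (z+1).val = z.val + 1 := by rw [hv1, Nat.mod_eq_of_lt h]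
      have := List.isChain_iff_getElem.mp hch z.val (by omega)
      convert this using 2
      all_goals simp only [List.get_eq_getElem, h0]
    · have hz : z.val = l.length - 1 := by have := ZMod.val_lt z; omega
      have h0 : (z+1).val = 0 := by rw [hv1, hz]; rw [Nat.sub_add_cancel (by omega)]; simp
      have h2 := hwrap hne
      rw [List.getLast_eq_getElem] at h2
      rw [show l.head hne = l.get ⟨0, by omega⟩ from (List.get_mk_zero (by omega)).symm] at h2
      convert h2 using 2 <;> simp [h0, hz]

lemma nonadjH {V : Type*} {G : SimpleGraph V} {n : ℕ} {f : ZMod n → V}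
    (hC : IsLongestCycle G n f)
    {H : (G.induce ((Set.range f)ᶜ : Set V)).ConnectedComponent}
    (x : ZMod n) (h h' : ((Set.range f)ᶜ : Set V))
    (hh : h ∈ H.supp) (hh' : h' ∈ H.supp)
    (hx : G.Adj (f x) ↑h) : ¬ G.Adj (f (x + 1)) ↑h' := by
  intro hadj
  classical
  have h3 : 3 ≤ n := hC.1.three_le
  haveI : NeZero n := ⟨by omega⟩
  have hr : (G.induce ((Set.range f)ᶜ : Set V)).Reachable h h' :=
    ConnectedComponent.exact (by
      rw [(H.mem_supp_iff h).mp hh, (H.mem_supp_iff h').mp hh'])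
  obtain ⟨p0⟩ := hr
  set q := p0.toPath with hq
  set A : List V := List.ofFn (fun t : Fin n => f (x + 1 + ((t : ℕ) : ZMod n))) with hA
  set B : List V := q.1.support.map (Subtype.val) with hB
  have hAlen : A.length = n := by simp [hA]
  have hBlen : B.length = q.1.length + 1 := by simp [hB]
  have hAne : A ≠ [] := by
    intro hcon; rw [← List.length_eq_zero_iff] at hcon; omega
  have hBne : B ≠ [] := by
    intro hcon; rw [← List.length_eq_zero_iff] at hcon; omega
  have castinj : Function.Injective (fun t : Fin n => f (x + 1 + ((t : ℕ) : ZMod n))) := by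
    intro t₁ t₂ ht
    have h1 : ((t₁ : ℕ) : ZMod n) = ((t₂ : ℕ) : ZMod n) := by
      have := hC.1.inj ht
      exact add_left_cancel this
    have := congrArg ZMod.val h1
    rw [ZMod.val_natCast, ZMod.val_natCast, Nat.mod_eq_of_lt t₁.2, Nat.mod_eq_of_lt t₂.2] at this
    exact Fin.ext this
  have lastA : A.getLast hAne = f x := by
    rw [List.getLast_eq_getElem, List.getElem_ofFn]
    show f _ = f x
    congr 1
    have hc : ((A.length - 1 : ℕ) : ZMod n) = -1 := by
      rw [hAlen]
      push_cast [Nat.cast_sub (by omega : 1 ≤ n)]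
      simp
    simp only [Fin.coe_cast]
    show x + 1 + ((A.length - 1 : ℕ) : ZMod n) = x
    rw [hc]; ring
  have headA : A.head hAne = f (x + 1) := by
    rw [← List.get_mk_zero (by omega : 0 < A.length), List.get_ofFn]
    show f _ = f (x + 1)
    congr 1
    simp only [Fin.coe_cast]
    show x + 1 + ((0 : ℕ) : ZMod n) = x + 1
    simp
  have headB? : B.head? = some (↑h : V) := by
    rw [hB, Walk.support_eq_cons]
    simp only [List.map_cons, List.head?_cons]
  have headB : B.head hBne = ↑h := by
    have h0 := List.head?_eq_head hBne
    rw [headB?] at h0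
    exact (Option.some.inj h0).symm
  have lastB? : B.getLast? = some (↑h' : V) := by
    rw [hB, List.getLast?_map, List.getLast?_eq_getLast q.1.support_ne_nil,
      q.1.getLast_support]
    rfl
  have lastB : B.getLast hBne = ↑h' := by
    have h0 := List.getLast?_eq_getLast hBne
    rw [lastB?] at h0
    exact (Option.some.inj h0).symm
  have hndA : A.Nodup := List.nodup_ofFn.mpr castinj
  have hndB : B.Nodup := (q.2.support_nodup).map Subtype.val_injective
  have hdisj : A.Disjoint B := by
    intro a haA haB
    rw [hA, List.mem_ofFn] at haA
    obtain ⟨t, rfl⟩ := haA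
    rw [hB, List.mem_map] at haB
    obtain ⟨s, _, hs⟩ := haB
    exact s.2 ⟨_, hs.symm⟩
  have hchain : (A ++ B).Chain' G.Adj := by
    rw [List.Chain', List.isChain_append]
    refine ⟨?_, ?_, ?_⟩
    · rw [List.isChain_iff_getElem]
      intro t ht
      rw [List.getElem_ofFn, List.getElem_ofFn]
      show G.Adj (f _) (f _)
      rw [hAlen] at ht
      simp only [Fin.coe_cast]
      show G.Adj (f (x + 1 + ((t : ℕ) : ZMod n))) (f (x + 1 + ((t + 1 : ℕ) : ZMod n)))
      push_cast
      rw [← add_assoc]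
      exact hC.1.adj _
    · exact List.isChain_map_of_isChain Subtype.val (fun a b hab => hab) q.1.isChain_adj_support
    · intro a ha b hb
      rw [List.getLast?_eq_getLast hAne] at ha
      rw [List.head?_eq_head hBne] at hb
      simp at ha hb
      rw [← ha, ← hb, lastA, headB]
      exact hx
  have hwrap : ∀ (hne : A ++ B ≠ []), G.Adj ((A ++ B).getLast hne) ((A ++ B).head hne) := by
    intro hne
    rw [List.getLast_append, List.head_append]
    rw [dif_neg (by simp [hBne]), dif_neg (by simp [hAne])]
    rw [lastB, headA]
    exact hadj.symm
  obtain ⟨g, hg⟩ := cycle_of_list G (A ++ B) (by simp [hAlen]; omega) 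
    (List.nodup_append'.mpr ⟨hndA, hndB, hdisj⟩) hchain hwrap
  have := hC.2 _ g hg
  rw [List.length_append, hAlen, hBlen] at this
  omega

lemma nonadjSucc {V : Type*} {G : SimpleGraph V} {n : ℕ} {f : ZMod n → V}
    (hC : IsLongestCycle G n f)
    {H : (G.induce ((Set.range f)ᶜ : Set V)).ConnectedComponent}
    (x y : ZMod n) (hxy : x ≠ y) (hx' hy' : ((Set.range f)ᶜ : Set V))
    (hhx : hx' ∈ H.supp) (hhy : hy' ∈ H.supp)
    (hx : G.Adj (f x) ↑hx') (hy : G.Adj (f y) ↑hy') :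
    ¬ G.Adj (f (x + 1)) (f (y + 1)) := by
  intro hadj
  classical
  have h3 : 3 ≤ n := hC.1.three_le
  haveI : NeZero n := ⟨by omega⟩
  set d : ℕ := (y - x).val with hd
  have hd1 : 1 ≤ d := by
    have : y - x ≠ 0 := fun hc => hxy (by
      have := sub_eq_zero.mp hc; exact this.symm)
    have := (ZMod.val_eq_zero (y - x)).not.mpr this
    omega
  have hdn : d < n := ZMod.val_lt (y - x)
  have hcd : ((d : ℕ) : ZMod n) = y - x := ZMod.natCast_rightInverse (y - x)
  have hr : (G.induce ((Set.range f)ᶜ : Set V)).Reachable hy' hx' :=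
    ConnectedComponent.exact (by
      rw [(H.mem_supp_iff hy').mp hhy, (H.mem_supp_iff hx').mp hhx])
  obtain ⟨p0⟩ := hr
  set q := p0.toPath with hq
  set A : List V := List.ofFn (fun t : Fin d => f (x + 1 + ((t : ℕ) : ZMod n))) with hA
  set B : List V := q.1.support.map (Subtype.val) with hB
  set Cc : List V := List.ofFn (fun t : Fin (n - d) => f (x - ((t : ℕ) : ZMod n))) with hC2
  have hAlen : A.length = d := by simp [hA]
  have hBlen : B.length = q.1.length + 1 := by simp [hB]
  have hClen : Cc.length = n - d := by simp [hC2]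
  have hAne : A ≠ [] := by intro hcon; rw [← List.length_eq_zero_iff] at hcon; omega
  have hBne : B ≠ [] := by intro hcon; rw [← List.length_eq_zero_iff] at hcon; omega
  have hCne : Cc ≠ [] := by intro hcon; rw [← List.length_eq_zero_iff] at hcon; omega
  have hBCne : B ++ Cc ≠ [] := by simp [hBne]
  -- injectivity helpers
  have injA : Function.Injective (fun t : Fin d => f (x + 1 + ((t : ℕ) : ZMod n))) := by
    intro t₁ t₂ ht
    have h1 := add_left_cancel (hC.1.inj ht)
    have := congrArg ZMod.val h1
    rw [ZMod.val_natCast, ZMod.val_natCast,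
      Nat.mod_eq_of_lt (lt_of_lt_of_le t₁.2 (by omega)),
      Nat.mod_eq_of_lt (lt_of_lt_of_le t₂.2 (by omega))] at this
    exact Fin.ext this
  have injC : Function.Injective (fun t : Fin (n - d) => f (x - ((t : ℕ) : ZMod n))) := by
    intro t₁ t₂ ht
    have h1 : ((t₁ : ℕ) : ZMod n) = ((t₂ : ℕ) : ZMod n) := by
      exact sub_right_injective (hC.1.inj ht)
    have := congrArg ZMod.val h1
    rw [ZMod.val_natCast, ZMod.val_natCast,
      Nat.mod_eq_of_lt (lt_of_lt_of_le t₁.2 (by omega)),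
      Nat.mod_eq_of_lt (lt_of_lt_of_le t₂.2 (by omega))] at this
    exact Fin.ext this
  -- endpoints
  have lastA : A.getLast hAne = f y := by
    rw [List.getLast_eq_getElem, List.getElem_ofFn]
    show f _ = f y
    congr 1
    simp only [Fin.coe_cast]
    show x + 1 + ((A.length - 1 : ℕ) : ZMod n) = y
    rw [hAlen]
    push_cast [Nat.cast_sub (by omega : 1 ≤ d)]
    rw [hcd]; ring
  have headA : A.head hAne = f (x + 1) := by
    rw [← List.get_mk_zero (by omega : 0 < A.length), List.get_ofFn]
    show f _ = f (x + 1)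
    congr 1
    simp only [Fin.coe_cast]
    show x + 1 + ((0 : ℕ) : ZMod n) = x + 1
    simp
  have headC : Cc.head hCne = f x := by
    rw [← List.get_mk_zero (by omega : 0 < Cc.length), List.get_ofFn]
    show f _ = f x
    congr 1
    simp only [Fin.coe_cast]
    show x - ((0 : ℕ) : ZMod n) = x
    simp
  have lastC : Cc.getLast hCne = f (y + 1) := by
    rw [List.getLast_eq_getElem, List.getElem_ofFn]
    show f _ = f (y + 1)
    congr 1
    simp only [Fin.coe_cast]
    show x - ((Cc.length - 1 : ℕ) : ZMod n) = y + 1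
    rw [hClen]
    push_cast [Nat.cast_sub (by omega : 1 ≤ n - d), Nat.cast_sub (by omega : d ≤ n)]
    rw [hcd]
    simp
    ring
  have headB? : B.head? = some (↑hy' : V) := by
    rw [hB, Walk.support_eq_cons]; simp only [List.map_cons, List.head?_cons]
  have headB : B.head hBne = ↑hy' := by
    have h0 := List.head?_eq_head hBne
    rw [headB?] at h0
    exact (Option.some.inj h0).symm
  have lastB? : B.getLast? = some (↑hx' : V) := by
    rw [hB, List.getLast?_map, List.getLast?_eq_getLast q.1.support_ne_nil,
      q.1.getLast_support]
    rfl
  have lastB : B.getLast hBne = ↑hx' := by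
    have h0 := List.getLast?_eq_getLast hBne
    rw [lastB?] at h0
    exact (Option.some.inj h0).symm
  -- nodup
  have hndA : A.Nodup := List.nodup_ofFn.mpr injA
  have hndB : B.Nodup := (q.2.support_nodup).map Subtype.val_injective
  have hndC : Cc.Nodup := List.nodup_ofFn.mpr injC
  have hBrange : ∀ a ∈ B, a ∉ Set.range f := by
    intro a haB
    rw [hB, List.mem_map] at haB
    obtain ⟨s, _, hs⟩ := haB
    exact fun hcon => s.2 (hs ▸ hcon)
  have hdisjAB : A.Disjoint B := by
    intro a haA haB
    rw [hA, List.mem_ofFn] at haA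
    obtain ⟨t, rfl⟩ := haA
    exact hBrange _ haB ⟨_, rfl⟩
  have hdisjCB : Cc.Disjoint B := by
    intro a haC haB
    rw [hC2, List.mem_ofFn] at haC
    obtain ⟨t, rfl⟩ := haC
    exact hBrange _ haB ⟨_, rfl⟩
  have hdisjAC : A.Disjoint Cc := by
    intro a haA haC
    rw [hA, List.mem_ofFn] at haA
    obtain ⟨t₁, rfl⟩ := haA
    rw [hC2, List.mem_ofFn] at haC
    obtain ⟨t₂, heq⟩ := haC
    have h1 : x - ((t₂ : ℕ) : ZMod n) = x + 1 + ((t₁ : ℕ) : ZMod n) := hC.1.inj heq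
    have h2 : (((t₁ : ℕ) + (t₂ : ℕ) + 1 : ℕ) : ZMod n) = 0 := by
      push_cast
      linear_combination -h1
    rw [ZMod.natCast_eq_zero_iff] at h2
    have ht₁ := t₁.2
    have ht₂ := t₂.2
    have := Nat.le_of_dvd (by omega) h2
    omega
  have hnd : (A ++ (B ++ Cc)).Nodup := by
    rw [List.nodup_append', List.nodup_append']
    refine ⟨hndA, ⟨hndB, hndC, fun a ha hb => hdisjCB hb ha⟩, ?_⟩
    intro a haA haBC
    rcases List.mem_append.mp haBC with h | h
    · exact hdisjAB haA h
    · exact hdisjAC haA h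
  -- chain
  have chainA : A.Chain' G.Adj := by
    rw [List.Chain', List.isChain_iff_getElem]
    intro t ht
    rw [List.getElem_ofFn, List.getElem_ofFn]
    show G.Adj (f _) (f _)
    simp only [Fin.coe_cast]
    show G.Adj (f (x + 1 + ((t : ℕ) : ZMod n))) (f (x + 1 + ((t + 1 : ℕ) : ZMod n)))
    push_cast
    rw [← add_assoc]
    exact hC.1.adj _
  have chainC : Cc.Chain' G.Adj := by
    rw [List.Chain', List.isChain_iff_getElem]
    intro t ht
    rw [List.getElem_ofFn, List.getElem_ofFn]
    show G.Adj (f _) (f _)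
    simp only [Fin.coe_cast]
    show G.Adj (f (x - ((t : ℕ) : ZMod n))) (f (x - ((t + 1 : ℕ) : ZMod n)))
    have := (hC.1.adj (x - ((t + 1 : ℕ) : ZMod n))).symm
    convert this using 2
    push_cast
    ring
  have chainB : B.Chain' G.Adj :=
    List.isChain_map_of_isChain Subtype.val (fun a b hab => hab) q.1.isChain_adj_support
  have hchain : (A ++ (B ++ Cc)).Chain' G.Adj := by
    rw [List.Chain', List.isChain_append, List.isChain_append]
    refine ⟨chainA, ⟨chainB, chainC, ?_⟩, ?_⟩
    · intro a ha b hb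
      rw [List.getLast?_eq_getLast hBne] at ha
      rw [List.head?_eq_head hCne] at hb
      simp at ha hb
      rw [← ha, ← hb, lastB, headC]
      exact hx.symm
    · intro a ha b hb
      rw [List.getLast?_eq_getLast hAne] at ha
      rw [List.head?_append_of_ne_nil _ hBne, List.head?_eq_head hBne] at hb
      simp at ha hb
      rw [← ha, ← hb, lastA, headB]
      exact hy
  have hwrap : ∀ (hne : A ++ (B ++ Cc) ≠ []),
      G.Adj ((A ++ (B ++ Cc)).getLast hne) ((A ++ (B ++ Cc)).head hne) := by
    intro hne
    rw [List.getLast_append, List.head_append]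
    rw [dif_neg (by simp [hBne]), dif_neg (by simp [hAne])]
    rw [List.getLast_append, dif_neg (by simp [hCne])]
    rw [lastC, headA]
    exact hadj.symm
  obtain ⟨g, hg⟩ := cycle_of_list G (A ++ (B ++ Cc))
    (by simp only [List.length_append]; omega)
    hnd hchain hwrap
  have := hC.2 _ g hg
  simp only [List.length_append] at this
  omega

lemma buildEmb {V : Type*} (G : SimpleGraph V) (a0 a1 a2 a3 a4 : V)
    (h01 : G.Adj a0 a1)
    (d02 : a0 ≠ a2) (d03 : a0 ≠ a3) (d04 : a0 ≠ a4)
    (d12 : a1 ≠ a2) (d13 : a1 ≠ a3) (d14 : a1 ≠ a4)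
    (d23 : a2 ≠ a3) (d24 : a2 ≠ a4) (d34 : a3 ≠ a4)
    (n02 : ¬ G.Adj a0 a2) (n03 : ¬ G.Adj a0 a3) (n04 : ¬ G.Adj a0 a4)
    (n12 : ¬ G.Adj a1 a2) (n13 : ¬ G.Adj a1 a3) (n14 : ¬ G.Adj a1 a4)
    (n23 : ¬ G.Adj a2 a3) (n24 : ¬ G.Adj a2 a4) (n34 : ¬ G.Adj a3 a4) :
    Nonempty (K2uK 3 ↪g G) := by
  have hinj : Function.Injective (![a0,a1,a2,a3,a4] : Fin 5 → V) := by
    intro x y hxy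
    fin_cases x <;> fin_cases y <;>
      first
      | rfl
      | exact absurd hxy h01.ne
      | exact absurd hxy h01.ne.symm
      | exact absurd hxy d02 | exact absurd hxy d02.symm
      | exact absurd hxy d03 | exact absurd hxy d03.symm
      | exact absurd hxy d04 | exact absurd hxy d04.symm
      | exact absurd hxy d12 | exact absurd hxy d12.symm
      | exact absurd hxy d13 | exact absurd hxy d13.symm
      | exact absurd hxy d14 | exact absurd hxy d14.symm
      | exact absurd hxy d23 | exact absurd hxy d23.symm
      | exact absurd hxy d24 | exact absurd hxy d24.symm
      | exact absurd hxy d34 | exact absurd hxy d34.symm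
  refine ⟨⟨⟨(![a0,a1,a2,a3,a4] : Fin 5 → V), hinj⟩, ?_⟩⟩
  intro a b
  fin_cases a <;> fin_cases b <;>
    first
    | exact iff_of_true h01 (by rw [K2uK, SimpleGraph.fromRel_adj]; exact ⟨by decide, Or.inl ⟨rfl, rfl⟩⟩)
    | exact iff_of_true h01.symm (by rw [K2uK, SimpleGraph.fromRel_adj]; exact ⟨by decide, Or.inr ⟨rfl, rfl⟩⟩)
    | exact iff_of_false G.irrefl (by rw [K2uK, SimpleGraph.fromRel_adj]; decide)
    | exact iff_of_false n02 (by rw [K2uK, SimpleGraph.fromRel_adj]; decide)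
    | exact iff_of_false (fun h => n02 h.symm) (by rw [K2uK, SimpleGraph.fromRel_adj]; decide)
    | exact iff_of_false n03 (by rw [K2uK, SimpleGraph.fromRel_adj]; decide)
    | exact iff_of_false (fun h => n03 h.symm) (by rw [K2uK, SimpleGraph.fromRel_adj]; decide)
    | exact iff_of_false n04 (by rw [K2uK, SimpleGraph.fromRel_adj]; decide)
    | exact iff_of_false (fun h => n04 h.symm) (by rw [K2uK, SimpleGraph.fromRel_adj]; decide)
    | exact iff_of_false n12 (by rw [K2uK, SimpleGraph.fromRel_adj]; decide)
    | exact iff_of_false (fun h => n12 h.symm) (by rw [K2uK, SimpleGraph.fromRel_adj]; decide)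
    | exact iff_of_false n13 (by rw [K2uK, SimpleGraph.fromRel_adj]; decide)
    | exact iff_of_false (fun h => n13 h.symm) (by rw [K2uK, SimpleGraph.fromRel_adj]; decide)
    | exact iff_of_false n14 (by rw [K2uK, SimpleGraph.fromRel_adj]; decide)
    | exact iff_of_false (fun h => n14 h.symm) (by rw [K2uK, SimpleGraph.fromRel_adj]; decide)
    | exact iff_of_false n23 (by rw [K2uK, SimpleGraph.fromRel_adj]; decide)
    | exact iff_of_false (fun h => n23 h.symm) (by rw [K2uK, SimpleGraph.fromRel_adj]; decide)
    | exact iff_of_false n24 (by rw [K2uK, SimpleGraph.fromRel_adj]; decide)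
    | exact iff_of_false (fun h => n24 h.symm) (by rw [K2uK, SimpleGraph.fromRel_adj]; decide)
    | exact iff_of_false n34 (by rw [K2uK, SimpleGraph.fromRel_adj]; decide)
    | exact iff_of_false (fun h => n34 h.symm) (by rw [K2uK, SimpleGraph.fromRel_adj]; decide)

theorem stmt_10 {V : Type*} (G : SimpleGraph V) (hfree : HFree (K2uK 3) G)
    (n : ℕ) (f : ZMod n → V) (hC : IsLongestCycle G n f)
    (H : (G.induce ((Set.range f)ᶜ : Set V)).ConnectedComponent)
    (i j k : ZMod n) (hij : f i ≠ f j) (hik : f i ≠ f k) (hjk : f j ≠ f k)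
    (hi : ∃ h ∈ H.supp, G.Adj (f i) ↑h) (hj : ∃ h ∈ H.supp, G.Adj (f j) ↑h)
    (hk : ∃ h ∈ H.supp, G.Adj (f k) ↑h) :
    H.supp.Subsingleton := by
  classical
  intro u hu v hv
  by_contra huv
  obtain ⟨hi', hih, hia⟩ := hi
  obtain ⟨hj', hjh, hja⟩ := hj
  obtain ⟨hk', hkh, hka⟩ := hk
  have hij' : i ≠ j := fun h => hij (congrArg f h)
  have hik' : i ≠ k := fun h => hik (congrArg f h)
  have hjk' : j ≠ k := fun h => hjk (congrArg f h)
  have hr : (G.induce ((Set.range f)ᶜ : Set V)).Reachable u v :=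
    ConnectedComponent.exact (by
      rw [(H.mem_supp_iff u).mp hu, (H.mem_supp_iff v).mp hv])
  obtain ⟨p⟩ := hr
  cases p with
  | nil => exact huv rfl
  | cons hadj p' =>
    rename_i w
    have hw : w ∈ H.supp := by
      rw [ConnectedComponent.mem_supp_iff, ← (H.mem_supp_iff u).mp hu]
      exact ConnectedComponent.sound (Adj.reachable hadj).symm
    have hadjuw : G.Adj ↑u ↑w := hadj
    have nui : ¬ G.Adj (f (i+1)) ↑u := nonadjH hC i hi' u hih hu hia
    have nuj : ¬ G.Adj (f (j+1)) ↑u := nonadjH hC j hj' u hjh hu hja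
    have nuk : ¬ G.Adj (f (k+1)) ↑u := nonadjH hC k hk' u hkh hu hka
    have nwi : ¬ G.Adj (f (i+1)) ↑w := nonadjH hC i hi' w hih hw hia
    have nwj : ¬ G.Adj (f (j+1)) ↑w := nonadjH hC j hj' w hjh hw hja
    have nwk : ¬ G.Adj (f (k+1)) ↑w := nonadjH hC k hk' w hkh hw hka
    have nij : ¬ G.Adj (f (i+1)) (f (j+1)) := nonadjSucc hC i j hij' hi' hj' hih hjh hia hja
    have nik : ¬ G.Adj (f (i+1)) (f (k+1)) := nonadjSucc hC i k hik' hi' hk' hih hkh hia hka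
    have njk : ¬ G.Adj (f (j+1)) (f (k+1)) := nonadjSucc hC j k hjk' hj' hk' hjh hkh hja hka
    have dfu : ∀ z : ZMod n, (↑u : V) ≠ f z := fun z h => u.2 ⟨z, h.symm⟩
    have dfw : ∀ z : ZMod n, (↑w : V) ≠ f z := fun z h => w.2 ⟨z, h.symm⟩
    have dij : f (i+1) ≠ f (j+1) := fun h => hij' (add_right_cancel (hC.1.inj h))
    have dik : f (i+1) ≠ f (k+1) := fun h => hik' (add_right_cancel (hC.1.inj h))
    have djk : f (j+1) ≠ f (k+1) := fun h => hjk' (add_right_cancel (hC.1.inj h))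
    exact hfree.false (buildEmb G (↑u) (↑w) (f (i+1)) (f (j+1)) (f (k+1))
      hadjuw (dfu _) (dfu _) (dfu _) (dfw _) (dfw _) (dfw _) dij dik djk
      (fun h => nui h.symm) (fun h => nuj h.symm) (fun h => nuk h.symm)
      (fun h => nwi h.symm) (fun h => nwj h.symm) (fun h => nwk h.symm)
      nij nik njk).some
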